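/- arXiv:2011.09731 — 2 statements merged into one kernel-verified Lean document; each statement's English description precedes it below -/
import Mathlib

section
/- For h(I₁,...,I₅) = I₄⁴/4 + I₅⁴/4 + I₃³/3 + I₃I₂²/2 − I₁²/2 − I₃²/2 − I₅²/2 + I₃I₄ + I₂, the function is four-jet non-degenerate at the origin: the only v ∈ ℝ⁵ satisfying h¹[v] = 0, h²[v,v] = 0, h³[v,v,v] = 0, and h⁴[v,v,v,v] = 0 is v = 0. -/
/-- The function `h(I) = I₄⁴/4 + I₅⁴/4 + I₃³/3 + I₃I₂²/2 − I₁²/2 − I₃²/2 − I₅²/2 + I₃I₄ + I₂`. -/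
noncomputable def h : (Fin 5 → ℝ) → ℝ :=
  fun I => (I 3) ^ 4 / 4 + (I 4) ^ 4 / 4 + (I 2) ^ 3 / 3 + (I 2) * (I 1) ^ 2 / 2
    - (I 0) ^ 2 / 2 - (I 2) ^ 2 / 2 - (I 4) ^ 2 / 2 + (I 2) * (I 3) + I 1

lemma h_contDiff : ContDiff ℝ (⊤ : ℕ∞) h := by
  unfold h
  fun_prop (disch := norm_num)

lemma deriv_p (a4 a3 a2 a1 a0 : ℝ) :
    deriv (fun t : ℝ => a4*t^4 + a3*t^3 + a2*t^2 + a1*t + a0)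
      = fun t : ℝ => 0*t^4 + (4*a4)*t^3 + (3*a3)*t^2 + (2*a2)*t + a1 := by
  funext t
  have H : HasDerivAt (fun t : ℝ => a4*t^4 + a3*t^3 + a2*t^2 + a1*t + a0)
      (a4*((4:ℕ)*t^3) + a3*((3:ℕ)*t^2) + a2*((2:ℕ)*t^1) + a1*1) t :=
    (((((hasDerivAt_pow 4 t).const_mul a4).add ((hasDerivAt_pow 3 t).const_mul a3)).add
      ((hasDerivAt_pow 2 t).const_mul a2)).add ((hasDerivAt_id t).const_mul a1)).add_const a0
  rw [H.deriv]; push_cast; ring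

lemma poly_d2 (a4 a3 a2 a1 a0 : ℝ) :
    iteratedDeriv 2 (fun t : ℝ => a4*t^4 + a3*t^3 + a2*t^2 + a1*t + a0) 0 = 2*a2 := by
  rw [iteratedDeriv_succ', deriv_p, iteratedDeriv_one, deriv_p]
  norm_num

lemma poly_d3 (a4 a3 a2 a1 a0 : ℝ) :
    iteratedDeriv 3 (fun t : ℝ => a4*t^4 + a3*t^3 + a2*t^2 + a1*t + a0) 0 = 6*a3 := by
  rw [iteratedDeriv_succ', deriv_p, iteratedDeriv_succ', deriv_p, iteratedDeriv_one, deriv_p]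
  norm_num
  ring

lemma poly_d4 (a4 a3 a2 a1 a0 : ℝ) :
    iteratedDeriv 4 (fun t : ℝ => a4*t^4 + a3*t^3 + a2*t^2 + a1*t + a0) 0 = 24*a4 := by
  rw [iteratedDeriv_succ', deriv_p, iteratedDeriv_succ', deriv_p, iteratedDeriv_succ', deriv_p,
    iteratedDeriv_one, deriv_p]
  norm_num
  ring

/-- `h` is four-jet non-degenerate at the origin. -/
theorem h_four_jet_nondegenerate :
    ∀ v : Fin 5 → ℝ,
      fderiv ℝ h 0 v = 0 →
      iteratedFDeriv ℝ 2 h 0 ![v, v] = 0 →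
      iteratedFDeriv ℝ 3 h 0 ![v, v, v] = 0 →
      iteratedFDeriv ℝ 4 h 0 ![v, v, v, v] = 0 →
      v = 0 := by
  intro v h1 h2 h3 h4
  set L : ℝ →L[ℝ] (Fin 5 → ℝ) := (ContinuousLinearMap.id ℝ ℝ).smulRight v with hLdef
  have hL0 : L 0 = 0 := by simp [hLdef]
  have hL1 : L 1 = v := by simp [hLdef]
  -- the restriction of h to the line through v
  have hcomp : h ∘ L = fun t : ℝ =>
      ((v 3)^4/4 + (v 4)^4/4)*t^4 + ((v 2)^3/3 + (v 2)*(v 1)^2/2)*t^3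
        + (-(v 0)^2/2 - (v 2)^2/2 - (v 4)^2/2 + (v 2)*(v 3))*t^2 + (v 1)*t + 0 := by
    funext t
    simp only [Function.comp_apply, hLdef, ContinuousLinearMap.smulRight_apply,
      ContinuousLinearMap.id_apply, h, Pi.smul_apply, smul_eq_mul]
    ring
  -- iterated derivatives along the line
  have key : ∀ n : ℕ, iteratedDeriv n (h ∘ L) 0 = iteratedFDeriv ℝ n h 0 (fun _ => v) := by
    intro n
    have := L.iteratedFDeriv_comp_right h_contDiff (0 : ℝ) (i := n) (mod_cast le_top)
    rw [iteratedDeriv, this, hL0]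
    simp [ContinuousMultilinearMap.compContinuousLinearMap_apply, hL1]
  -- equation 1 : v 1 = 0
  have hd : HasDerivAt (h ∘ L) (fderiv ℝ h 0 v) 0 := by
    have hh : HasFDerivAt h (fderiv ℝ h 0) (L 0) := by
      rw [hL0]
      exact (h_contDiff.differentiable (by simp) 0).hasFDerivAt
    have hLd : HasDerivAt L v 0 := by
      simpa [hL1] using L.hasDerivAt (x := (0:ℝ))
    simpa [hL1] using hh.comp_hasDerivAt 0 hLd
  have e1 : v 1 = 0 := by
    have := hd.deriv
    rw [hcomp] at this
    rw [deriv_p] at this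
    simp at this
    rw [← h1, ← this]
  -- equations 2,3,4
  have e2 : 2*(-(v 0)^2/2 - (v 2)^2/2 - (v 4)^2/2 + (v 2)*(v 3)) = 0 := by
    have k := key 2
    rw [hcomp, poly_d2] at k
    rw [k]
    convert h2 using 2
    funext i; fin_cases i <;> rfl
  have e3 : 6*((v 2)^3/3 + (v 2)*(v 1)^2/2) = 0 := by
    have k := key 3
    rw [hcomp, poly_d3] at k
    rw [k]
    convert h3 using 2
    funext i; fin_cases i <;> rfl
  have e4 : 24*((v 3)^4/4 + (v 4)^4/4) = 0 := by
    have k := key 4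
    rw [hcomp, poly_d4] at k
    rw [k]
    convert h4 using 2
    funext i; fin_cases i <;> rfl
  -- solve
  have hc : v 2 = 0 := by
    have : (v 2)^3 = 0 := by rw [e1] at e3; linarith
    exact pow_eq_zero_iff (by norm_num) |>.mp this
  have s3 : (0:ℝ) ≤ (v 3)^4 := by positivity
  have s4 : (0:ℝ) ≤ (v 4)^4 := by positivity
  have hd4 : v 3 = 0 := pow_eq_zero_iff (n := 4) (by norm_num) |>.mp (by linarith)
  have he : v 4 = 0 := pow_eq_zero_iff (n := 4) (by norm_num) |>.mp (by linarith)
  have ha : v 0 = 0 := by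
    have : (v 0)^2 = 0 := by rw [hc, he] at e2; linarith
    exact pow_eq_zero_iff (by norm_num) |>.mp this
  funext i
  fin_cases i <;> simp [ha, e1, hc, hd4, he]
end

section
/- For h(I₁,...,I₅) = I₄⁴/4 + I₅⁴/4 + I₃³/3 + I₃I₂²/2 − I₁²/2 − I₃²/2 − I₅²/2 + I₃I₄ + I₂, every nonzero v ∈ ℝ⁵ satisfying h¹[v] = 0, h²[v,v] = 0, and h³[v,v,v] = 0 at the origin has the form v = (0,0,0,v₄,0) with v₄ ≠ 0. -/
lemma fderiv_h_apply (x v : Fin 5 → ℝ) :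
    fderiv ℝ h x v = x 3 ^ 3 * v 3 + x 4 ^ 3 * v 4 + x 2 ^ 2 * v 2
      + (v 2 * x 1 ^ 2 + 2 * x 2 * x 1 * v 1) / 2 - x 0 * v 0 - x 2 * v 2 - x 4 * v 4
      + v 2 * x 3 + x 2 * v 3 + v 1 := by
  have hfun : h = fun y : Fin 5 → ℝ =>
      (4:ℝ)⁻¹ * y 3 ^ 4 + (4:ℝ)⁻¹ * y 4 ^ 4 + (3:ℝ)⁻¹ * y 2 ^ 3 + (2:ℝ)⁻¹ * (y 2 * y 1 ^ 2)
        - (2:ℝ)⁻¹ * y 0 ^ 2 - (2:ℝ)⁻¹ * y 2 ^ 2 - (2:ℝ)⁻¹ * y 4 ^ 2 + y 2 * y 3 + y 1 := by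
    funext y; unfold h; ring
  have hp : ∀ i : Fin 5, HasFDerivAt (fun y : Fin 5 → ℝ => y i)
      (ContinuousLinearMap.proj i : (Fin 5 → ℝ) →L[ℝ] ℝ) x :=
    fun i => hasFDerivAt_apply i x
  have hq : ∀ (i : Fin 5) (n : ℕ), HasFDerivAt (fun y : Fin 5 → ℝ => y i ^ n)
      ((↑n * x i ^ (n - 1)) • (ContinuousLinearMap.proj i : (Fin 5 → ℝ) →L[ℝ] ℝ)) x :=
    fun i n => (hasDerivAt_pow n (x i)).comp_hasFDerivAt x (hp i)
  have H := (((((((((hq 3 4).const_mul (4:ℝ)⁻¹).add ((hq 4 4).const_mul (4:ℝ)⁻¹)).add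
      ((hq 2 3).const_mul (3:ℝ)⁻¹)).add (((hp 2).mul (hq 1 2)).const_mul (2:ℝ)⁻¹)).sub
      ((hq 0 2).const_mul (2:ℝ)⁻¹)).sub ((hq 2 2).const_mul (2:ℝ)⁻¹)).sub
      ((hq 4 2).const_mul (2:ℝ)⁻¹)).add ((hp 2).mul (hp 3))).add (hp 1)
  erw [hfun, H.fderiv]
  simp [ContinuousLinearMap.proj_apply]
  ring

lemma fderiv2_h_apply (y v w : Fin 5 → ℝ) :
    fderiv ℝ (fun x => fderiv ℝ h x v) y w =
      3 * y 3 ^ 2 * w 3 * v 3 + 3 * y 4 ^ 2 * w 4 * v 4 + 2 * y 2 * w 2 * v 2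
        + v 2 * y 1 * w 1 + (w 2 * y 1 + y 2 * w 1) * v 1 - w 0 * v 0 - w 2 * v 2 - w 4 * v 4
        + v 2 * w 3 + w 2 * v 3 := by
  have hfun : (fun x : Fin 5 → ℝ => fderiv ℝ h x v) = fun x : Fin 5 → ℝ =>
      v 3 * x 3 ^ 3 + v 4 * x 4 ^ 3 + v 2 * x 2 ^ 2 + (v 2 / 2) * x 1 ^ 2
        + v 1 * (x 2 * x 1) - v 0 * x 0 - v 2 * x 2 - v 4 * x 4 + v 2 * x 3 + v 3 * x 2 + v 1 := by
    funext x; rw [fderiv_h_apply]; ring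
  have hp : ∀ i : Fin 5, HasFDerivAt (fun z : Fin 5 → ℝ => z i)
      (ContinuousLinearMap.proj i : (Fin 5 → ℝ) →L[ℝ] ℝ) y :=
    fun i => hasFDerivAt_apply i y
  have hq : ∀ (i : Fin 5) (n : ℕ), HasFDerivAt (fun z : Fin 5 → ℝ => z i ^ n)
      ((↑n * y i ^ (n - 1)) • (ContinuousLinearMap.proj i : (Fin 5 → ℝ) →L[ℝ] ℝ)) y :=
    fun i n => (hasDerivAt_pow n (y i)).comp_hasFDerivAt y (hp i)
  have H := (((((((((((hq 3 3).const_mul (v 3)).add ((hq 4 3).const_mul (v 4))).add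
    ((hq 2 2).const_mul (v 2))).add ((hq 1 2).const_mul (v 2 / 2))).add
    (((hp 2).mul (hp 1)).const_mul (v 1))).sub ((hp 0).const_mul (v 0))).sub
    ((hp 2).const_mul (v 2))).sub ((hp 4).const_mul (v 4))).add
    ((hp 3).const_mul (v 2))).add ((hp 2).const_mul (v 3))).add_const (v 1)
  erw [hfun, H.fderiv]
  simp [ContinuousLinearMap.proj_apply]
  ring

lemma fderiv3_h_apply (v : Fin 5 → ℝ) :
    fderiv ℝ (fun y => fderiv ℝ (fun x => fderiv ℝ h x v) y v) 0 v
      = 2 * v 2 ^ 3 + 3 * v 2 * v 1 ^ 2 := by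
  have hfun : (fun y : Fin 5 → ℝ => fderiv ℝ (fun x => fderiv ℝ h x v) y v)
      = fun y : Fin 5 → ℝ =>
      (3 * v 3 ^ 2) * y 3 ^ 2 + (3 * v 4 ^ 2) * y 4 ^ 2 + (2 * v 2 ^ 2) * y 2
        + (2 * v 1 * v 2) * y 1 + (v 1 ^ 2) * y 2
        + (- v 0 ^ 2 - v 2 ^ 2 - v 4 ^ 2 + 2 * v 2 * v 3) := by
    funext y; rw [fderiv2_h_apply]; ring
  have hp : ∀ i : Fin 5, HasFDerivAt (fun z : Fin 5 → ℝ => z i)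
      (ContinuousLinearMap.proj i : (Fin 5 → ℝ) →L[ℝ] ℝ) (0 : Fin 5 → ℝ) :=
    fun i => hasFDerivAt_apply i 0
  have hq : ∀ (i : Fin 5) (n : ℕ), HasFDerivAt (fun z : Fin 5 → ℝ => z i ^ n)
      ((↑n * (0:ℝ) ^ (n - 1)) • (ContinuousLinearMap.proj i : (Fin 5 → ℝ) →L[ℝ] ℝ)) 0 :=
    fun i n => by
      exact (hasDerivAt_pow n ((0 : Fin 5 → ℝ) i)).comp_hasFDerivAt 0 (hp i)
  have H := ((((((hq 3 2).const_mul (3 * v 3 ^ 2)).add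
    ((hq 4 2).const_mul (3 * v 4 ^ 2))).add ((hp 2).const_mul (2 * v 2 ^ 2))).add
    ((hp 1).const_mul (2 * v 1 * v 2))).add ((hp 2).const_mul (v 1 ^ 2))).add_const
    (- v 0 ^ 2 - v 2 ^ 2 - v 4 ^ 2 + 2 * v 2 * v 3)
  erw [hfun, H.fderiv]
  simp [ContinuousLinearMap.proj_apply]
  ring

lemma hd1 : ContDiff ℝ (⊤ : ℕ∞) (fderiv ℝ h) := h_contDiff.fderiv_right (mod_cast le_top)
lemma hd2 : ContDiff ℝ (⊤ : ℕ∞) (fderiv ℝ (fderiv ℝ h)) := hd1.fderiv_right (mod_cast le_top)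

lemma second_deriv (v : Fin 5 → ℝ) :
    iteratedFDeriv ℝ 2 h 0 ![v, v] = fderiv ℝ (fun x => fderiv ℝ h x v) 0 v := by
  rw [iteratedFDeriv_two_apply]
  have := fderiv_clm_apply (c := fderiv ℝ h) (u := fun _ => v) (x := (0 : Fin 5 → ℝ))
    (hd1.differentiable (by simp) _) (differentiableAt_const v)
  rw [this]
  simp

lemma third_deriv (v : Fin 5 → ℝ) :
    iteratedFDeriv ℝ 3 h 0 ![v, v, v]
      = fderiv ℝ (fun y => fderiv ℝ (fun x => fderiv ℝ h x v) y v) 0 v := by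
  have hinit : Fin.init ![v, v, v] = ![v, v] := by
    funext i; fin_cases i <;> simp [Fin.init]
  show iteratedFDeriv ℝ (2 + 1) h 0 ![v, v, v] = _
  rw [iteratedFDeriv_succ_apply_right, iteratedFDeriv_two_apply]
  have i0 : Fin.init ![v, v, v] 0 = v := rfl
  have i1 : Fin.init ![v, v, v] 1 = v := rfl
  have hlast : ![v, v, v] (Fin.last 2) = v := rfl
  rw [i0, i1, hlast]
  -- now: fderiv (fderiv (fderiv h)) 0 v v v = RHS
  have e1 : fderiv ℝ (fun y => fderiv ℝ (fderiv ℝ h) y v) 0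
      = (fderiv ℝ (fderiv ℝ (fderiv ℝ h)) 0).flip v := by
    have := fderiv_clm_apply (c := fderiv ℝ (fderiv ℝ h)) (u := fun _ => v)
      (x := (0 : Fin 5 → ℝ)) (hd2.differentiable (by simp) _)
      (differentiableAt_const v)
    rw [this]; simp
  have e3 : (fun y => fderiv ℝ (fderiv ℝ h) y v v)
      = fun y => fderiv ℝ (fun x => fderiv ℝ h x v) y v := by
    funext y
    have h' : fderiv ℝ (fun x => fderiv ℝ h x v) y
        = (fderiv ℝ h y).comp (fderiv ℝ (fun _ : Fin 5 → ℝ => v) y)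
          + (fderiv ℝ (fderiv ℝ h) y).flip v :=
      fderiv_clm_apply (c := fderiv ℝ h) (u := fun _ => v) (x := y)
        (hd1.differentiable (by simp) _) (differentiableAt_const v)
    rw [h']
    simp
  -- target LHS: fderiv (fderiv (fderiv h)) 0 (m 0) (m 1) applied? need simp of m entries
  show fderiv ℝ (fderiv ℝ (fderiv ℝ h)) 0 v v v = _
  have step1 : fderiv ℝ (fderiv ℝ (fderiv ℝ h)) 0 v v v
      = fderiv ℝ (fun y => fderiv ℝ (fderiv ℝ h) y v) 0 v v := by
    rw [e1]; rfl
  rw [step1]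
  have hc1 : DifferentiableAt ℝ (fun y => fderiv ℝ (fderiv ℝ h) y v) 0 :=
    ((hd2.differentiable (by simp)) 0).clm_apply (differentiableAt_const v)
  have e4 : fderiv ℝ (fun y => fderiv ℝ (fderiv ℝ h) y v v) 0
      = (fderiv ℝ (fun y => fderiv ℝ (fderiv ℝ h) y v) 0).flip v := by
    have := fderiv_clm_apply (c := fun y => fderiv ℝ (fderiv ℝ h) y v) (u := fun _ => v)
      (x := (0 : Fin 5 → ℝ)) hc1 (differentiableAt_const v)
    rw [this]; simp
  have step2 : fderiv ℝ (fun y => fderiv ℝ (fderiv ℝ h) y v) 0 v v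
      = fderiv ℝ (fun y => fderiv ℝ (fderiv ℝ h) y v v) 0 v := by
    rw [e4]; rfl
  rw [step2, e3]

/-- Every nonzero `v` on which `h` is three-jet degenerate at the origin has the
form `v = (0, 0, 0, v₄, 0)` with `v₄ ≠ 0`. -/
theorem three_jet_degenerate_directions :
    ∀ v : Fin 5 → ℝ, v ≠ 0 →
      fderiv ℝ h 0 v = 0 →
      iteratedFDeriv ℝ 2 h 0 ![v, v] = 0 →
      iteratedFDeriv ℝ 3 h 0 ![v, v, v] = 0 →
      ∃ v₄ : ℝ, v₄ ≠ 0 ∧ v = ![0, 0, 0, v₄, 0] := by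
  intro v hv h1 h2 h3
  rw [fderiv_h_apply] at h1
  simp only [Pi.zero_apply] at h1
  norm_num at h1
  have hv1 : v 1 = 0 := h1
  rw [second_deriv, fderiv2_h_apply] at h2
  simp only [Pi.zero_apply] at h2
  norm_num at h2
  rw [third_deriv, fderiv3_h_apply] at h3
  have hv2 : v 2 = 0 := by
    have h23 : v 2 ^ 3 = 0 := by rw [hv1] at h3; nlinarith [h3]
    exact pow_eq_zero_iff (by norm_num) |>.mp h23
  rw [hv2] at h2
  have h04 : v 0 * v 0 + v 4 * v 4 = 0 := by nlinarith [h2]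
  have hv0 : v 0 = 0 := by
    have := mul_self_eq_zero.mp (le_antisymm (by nlinarith [mul_self_nonneg (v 4)]) (mul_self_nonneg (v 0)))
    exact this
  have hv4 : v 4 = 0 := by
    have := mul_self_eq_zero.mp (le_antisymm (by nlinarith [mul_self_nonneg (v 0)]) (mul_self_nonneg (v 4)))
    exact this
  refine ⟨v 3, ?_, ?_⟩
  · intro h30
    apply hv
    funext i; fin_cases i <;> simp [hv0, hv1, hv2, h30, hv4]
  · funext i; fin_cases i <;> simp [hv0, hv1, hv2, hv4]
end
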